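/- With φ_T as above, if a tensor T ∈ ℂ³ ⊗ ℂ³ ⊗ ℂ³ can be written as a sum of r rank-one tensors, then the matrix φ_T has rank at most 2r. In particular, if T is a sum of 4 rank-one tensors then det(φ_T) = 0. -/

import Mathlib

/-- Ottaviani's matrix `φ_T` built from the first-factor slices `T¹ = T 0`,
`T² = T 1`, `T³ = T 2` of a tensor `T ∈ ℂ³⊗ℂ³⊗ℂ³`, as the 9×9 block matrix
with block rows `(0, T¹, -T²)`, `(-T¹, 0, T³)`, `(T², -T³, 0)`. -/
def phi (T : Fin 3 → Matrix (Fin 3) (Fin 3) ℂ) :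
    Matrix (Fin 3 × Fin 3) (Fin 3 × Fin 3) ℂ :=
  Matrix.of fun p q =>
    (![![0, T 0, -(T 1)], ![-(T 0), 0, T 2], ![T 1, -(T 2), 0]] p.1 q.1) p.2 q.2

open Matrix Module

lemma rank_add_le' {m n : Type*} [Fintype m] [Fintype n] (A B : Matrix m n ℂ) :
    (A + B).rank ≤ A.rank + B.rank := by
  rw [Matrix.rank, Matrix.rank, Matrix.rank]
  calc finrank ℂ (LinearMap.range (A + B).mulVecLin)
      ≤ finrank ℂ ↥(LinearMap.range A.mulVecLin ⊔ LinearMap.range B.mulVecLin) := by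
        apply Submodule.finrank_mono
        rw [Matrix.mulVecLin_add]
        rintro x ⟨v, rfl⟩
        exact Submodule.add_mem_sup ⟨v, rfl⟩ ⟨v, rfl⟩
    _ ≤ _ := Submodule.finrank_add_le_finrank_add_finrank _ _

lemma rank_sum_le' {m n ι : Type*} [Fintype m] [Fintype n] (s : Finset ι)
    (f : ι → Matrix m n ℂ) : (∑ i ∈ s, f i).rank ≤ ∑ i ∈ s, (f i).rank := by
  classical
  induction s using Finset.cons_induction with
  | empty => simp [Matrix.rank_zero]
  | cons i s hi ih =>
    rw [Finset.sum_cons, Finset.sum_cons]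
    exact le_trans (rank_add_le' _ _) (by omega)

def skw (a : Fin 3 → ℂ) : Matrix (Fin 3) (Fin 3) ℂ :=
  ![![0, a 0, -(a 1)], ![-(a 0), 0, a 2], ![a 1, -(a 2), 0]]

lemma skw_det (a : Fin 3 → ℂ) : (skw a).det = 0 := by
  rw [Matrix.det_fin_three]; simp [skw]; ring

lemma skw_rank (a : Fin 3 → ℂ) : (skw a).rank ≤ 2 := by
  by_contra h
  push_neg at h
  have h3 : (skw a).rank ≤ 3 := by simpa using (skw a).rank_le_card_width
  have heq : (skw a).rank = 3 := by omega
  have htop : LinearMap.range (skw a).mulVecLin = ⊤ := by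
    apply Submodule.eq_top_of_finrank_eq
    rw [← Matrix.rank, heq]
    simp [finrank_fintype_fun_eq_card]
  have hsurj : Function.Surjective ((skw a).mulVec) := by
    have := LinearMap.range_eq_top.mp htop
    exact this
  have := Matrix.mulVec_surjective_iff_isUnit.mp hsurj
  rw [Matrix.isUnit_iff_isUnit_det, skw_det] at this
  simp at this

def ksing (a b c : Fin 3 → ℂ) : Matrix (Fin 3 × Fin 3) (Fin 3 × Fin 3) ℂ :=
  Matrix.of fun p q => skw a p.1 q.1 * (b p.2 * c q.2)

lemma ksing_rank (a b c : Fin 3 → ℂ) : (ksing a b c).rank ≤ 2 := by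
  classical
  set C : Matrix (Fin 3 × Fin 3) (Fin 3) ℂ :=
    Matrix.of (fun p j => if p.1 = j then b p.2 else 0) with hC
  set Bm : Matrix (Fin 3) (Fin 3 × Fin 3) ℂ :=
    Matrix.of (fun j q => if j = q.1 then c q.2 else 0) with hB
  have hfac : ksing a b c = C * (skw a * Bm) := by
    ext p q
    simp [ksing, hC, hB, Matrix.mul_apply, Finset.mul_sum, Finset.sum_ite_eq,
      Finset.sum_ite_eq']
    ring
  rw [hfac]
  exact le_trans (Matrix.rank_mul_le_right C (skw a * Bm))
    (le_trans (Matrix.rank_mul_le_left (skw a) Bm) (skw_rank a))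

lemma phi_decomp (r : ℕ) (a b c : Fin r → Fin 3 → ℂ)
    (T : Fin 3 → Matrix (Fin 3) (Fin 3) ℂ)
    (hT : ∀ i, T i = ∑ s, a s i • Matrix.vecMulVec (b s) (c s)) :
    phi T = ∑ s, ksing (a s) (b s) (c s) := by
  ext ⟨p1, p2⟩ ⟨q1, q2⟩
  simp only [Matrix.sum_apply]
  fin_cases p1 <;> fin_cases q1 <;>
    simp [phi, ksing, skw, hT, Matrix.sum_apply, Matrix.vecMulVec_apply,
      Finset.sum_neg_distrib, mul_comm, mul_assoc, mul_left_comm]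

theorem phi_rank_of_sum_of_rank_ones (r : ℕ) (a b c : Fin r → Fin 3 → ℂ)
    (T : Fin 3 → Matrix (Fin 3) (Fin 3) ℂ)
    (hT : ∀ i, T i = ∑ s, a s i • Matrix.vecMulVec (b s) (c s)) :
    (phi T).rank ≤ 2 * r ∧ (r = 4 → (phi T).det = 0) := by
  have hrank : (phi T).rank ≤ 2 * r := by
    rw [phi_decomp r a b c T hT]
    calc (∑ s, ksing (a s) (b s) (c s)).rank
        ≤ ∑ s : Fin r, (ksing (a s) (b s) (c s)).rank := rank_sum_le' _ _
      _ ≤ ∑ _s : Fin r, 2 := Finset.sum_le_sum fun s _ => ksing_rank _ _ _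
      _ = 2 * r := by simp [mul_comm]
  refine ⟨hrank, fun hr => ?_⟩
  by_contra hdet
  have hu : IsUnit (phi T) :=
    (Matrix.isUnit_iff_isUnit_det _).mpr (isUnit_iff_ne_zero.mpr hdet)
  have h9 : (phi T).rank = 9 := by
    have := Matrix.rank_of_isUnit (phi T) hu
    simpa using this
  omega
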